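/- Let A be an n×m matrix with value v, first column c_1 = v·1_n, no other column in span{1_n}, and suppose every column of A is a 'sometimes best response' for Player 2 (i.e., for every j there exists x ∈ S_n with (c_j)^T x = min_i (c_i)^T x). If moreover Player 1's equilibrium set X* is disjoint from ∂S_n, then for every j ≥ 2, the column c_j has at least one entry strictly less than v. -/
import Mathlib


noncomputable def colPay {n m : ℕ} (A : Matrix (Fin n) (Fin m) ℝ) (i : Fin m)
    (x : Fin n → ℝ) : ℝ := ∑ j, A j i * x j

noncomputable def minPay {n m : ℕ} (A : Matrix (Fin n) (Fin (m + 1)) ℝ)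
    (x : Fin n → ℝ) : ℝ :=
  Finset.univ.inf' Finset.univ_nonempty fun i => colPay A i x

/-- Relative boundary of the probability simplex: points with some zero coordinate. -/
def simplexBoundary (n : ℕ) : Set (Fin n → ℝ) :=
  {x ∈ stdSimplex ℝ (Fin n) | ∃ j, x j = 0}

theorem stmt8 {n m : ℕ} (A : Matrix (Fin (n + 1)) (Fin (m + 1)) ℝ) (v : ℝ)
    -- v is the value of the game
    (hub : ∀ x ∈ stdSimplex ℝ (Fin (n + 1)), minPay A x ≤ v)
    (hach : ∃ x ∈ stdSimplex ℝ (Fin (n + 1)), minPay A x = v)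
    -- the first column is v·1_n
    (hc1 : ∀ j, A j 0 = v)
    -- no other column lies in span{1_n}
    (hmult : ∀ i : Fin (m + 1), i ≠ 0 → ¬ ∃ c : ℝ, ∀ j, A j i = c)
    -- every column is a sometimes best response for Player 2
    (hbr : ∀ i : Fin (m + 1), ∃ x ∈ stdSimplex ℝ (Fin (n + 1)),
      ∀ i' : Fin (m + 1), colPay A i x ≤ colPay A i' x)
    -- every equilibrium of Player 1 is fully mixed
    (hbd : {x ∈ stdSimplex ℝ (Fin (n + 1)) | minPay A x = v} ∩ simplexBoundary (n + 1) = ∅) :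
    ∀ i : Fin (m + 1), i ≠ 0 → ∃ l : Fin (n + 1), A l i < v := by
  intro i hi
  by_contra h
  push_neg at h
  -- all entries of column i are ≥ v, and some entry is > v
  obtain ⟨l, hl⟩ : ∃ l, v < A l i := by
    by_contra hall
    push_neg at hall
    exact hmult i hi ⟨v, fun j => le_antisymm (hall j) (h j)⟩
  obtain ⟨x, hx, hxbr⟩ := hbr i
  have hxs : ∑ j, x j = 1 := hx.2
  have hxnn : ∀ j, 0 ≤ x j := hx.1
  have hcol0 : colPay A 0 x = v := by
    simp only [colPay, hc1]
    rw [← Finset.mul_sum, hxs, mul_one]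
  have hgev : ∀ i' : Fin (m + 1), v ≤ colPay A i' x := by
    intro i'
    calc v = colPay A i x := by
            refine le_antisymm ?_ (hcol0 ▸ hxbr 0)
            calc v = ∑ j, v * x j := by rw [← Finset.mul_sum, hxs, mul_one]
              _ ≤ ∑ j, A j i * x j :=
                  Finset.sum_le_sum fun j _ => mul_le_mul_of_nonneg_right (h j) (hxnn j)
      _ ≤ colPay A i' x := hxbr i'
  have hcoli : colPay A i x = v := le_antisymm (hcol0 ▸ hxbr 0) (hgev i)
  have hmin : minPay A x = v := by
    refine le_antisymm (hcoli ▸ Finset.inf'_le _ (Finset.mem_univ i)) ?_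
    exact Finset.le_inf' _ _ fun i' _ => hgev i'
  -- x is an equilibrium, so it is not on the boundary
  have hpos : ∀ j, 0 < x j := by
    intro j
    rcases lt_or_eq_of_le (hxnn j) with hp | hp
    · exact hp
    · exfalso
      have : x ∈ ({x ∈ stdSimplex ℝ (Fin (n + 1)) | minPay A x = v} ∩
          simplexBoundary (n + 1)) := ⟨⟨hx, hmin⟩, ⟨hx, ⟨j, hp.symm⟩⟩⟩
      rw [hbd] at this
      exact this
  -- strict inequality: colPay A i x > v, contradiction
  have : v < colPay A i x := by
    calc v = ∑ j, v * x j := by rw [← Finset.mul_sum, hxs, mul_one]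
      _ < ∑ j, A j i * x j := by
          refine Finset.sum_lt_sum (fun j _ => mul_le_mul_of_nonneg_right (h j) (hxnn j)) ?_
          exact ⟨l, Finset.mem_univ l, mul_lt_mul_of_pos_right hl (hpos l)⟩
  exact absurd hcoli (ne_of_gt this)
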